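/- Let μ ∈ (0,1) and define f : ℝ → ℝ by f(r) = √(r²/μ² − 1) − arccos(μ/r). Then for every r with μ < r ≤ 1, f is differentiable at r with f'(r) = √(1/μ² − 1/r²); consequently, the classical Value function V(r,θ) = θ − √(1/μ² − 1) + arccos μ + √(r²/μ² − 1) − arccos(μ/r) satisfies ∂V/∂θ = 1, ∂V/∂r = √(1/μ² − 1/r²), and the Isaacs identity μ²·((∂V/∂r)² + 1/r²) = 1 at every such r. -/

import Mathlib

/-- For `μ ∈ (0,1)` and `f r = √(r²/μ² − 1) − arccos(μ/r)`, at every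
`r` with `μ < r ≤ 1` the function `f` has derivative `√(1/μ² − 1/r²)`; consequently the
classical Value function `V(r,θ) = θ − √(1/μ² − 1) + arccos μ + √(r²/μ² − 1) − arccos(μ/r)`
satisfies `∂V/∂θ = 1`, `∂V/∂r = √(1/μ² − 1/r²)` and the Isaacs identity
`μ²·((∂V/∂r)² + 1/r²) = 1` at every such `r`. -/
theorem stmt_0 (μ : ℝ) (hμ : μ ∈ Set.Ioo (0 : ℝ) 1)
    (f : ℝ → ℝ)
    (hf : ∀ r : ℝ, f r = Real.sqrt (r ^ 2 / μ ^ 2 - 1) - Real.arccos (μ / r))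
    (V : ℝ → ℝ → ℝ)
    (hV : ∀ r θ : ℝ, V r θ =
      θ - Real.sqrt (1 / μ ^ 2 - 1) + Real.arccos μ
        + Real.sqrt (r ^ 2 / μ ^ 2 - 1) - Real.arccos (μ / r)) :
    ∀ r : ℝ, μ < r → r ≤ 1 →
      HasDerivAt f (Real.sqrt (1 / μ ^ 2 - 1 / r ^ 2)) r ∧
      (∀ θ : ℝ, HasDerivAt (fun θ' => V r θ') 1 θ) ∧
      (∀ θ : ℝ, HasDerivAt (fun r' => V r' θ) (Real.sqrt (1 / μ ^ 2 - 1 / r ^ 2)) r) ∧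
      μ ^ 2 * ((Real.sqrt (1 / μ ^ 2 - 1 / r ^ 2)) ^ 2 + 1 / r ^ 2) = 1 := by
  obtain ⟨hμ0, hμ1⟩ := hμ
  intro r hμr hr1
  have hr0 : 0 < r := lt_trans hμ0 hμr
  have hμ0' : μ ≠ 0 := ne_of_gt hμ0
  have hr0' : r ≠ 0 := ne_of_gt hr0
  have hsq : 0 < r ^ 2 - μ ^ 2 := by nlinarith
  have hμ2 : (0:ℝ) < μ ^ 2 := by positivity
  -- s = sqrt (r² - μ²)
  set s := Real.sqrt (r ^ 2 - μ ^ 2) with hs_def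
  have hs0 : 0 < s := Real.sqrt_pos.mpr hsq
  have hs2 : s ^ 2 = r ^ 2 - μ ^ 2 := Real.sq_sqrt hsq.le
  -- key sqrt rewrites
  have e1 : Real.sqrt (r ^ 2 / μ ^ 2 - 1) = s / μ := by
    have : r ^ 2 / μ ^ 2 - 1 = (r ^ 2 - μ ^ 2) / μ ^ 2 := by field_simp
    rw [this, Real.sqrt_div hsq.le, Real.sqrt_sq hμ0.le]
  have e2 : Real.sqrt (1 - (μ / r) ^ 2) = s / r := by
    have : 1 - (μ / r) ^ 2 = (r ^ 2 - μ ^ 2) / r ^ 2 := by field_simp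
    rw [this, Real.sqrt_div hsq.le, Real.sqrt_sq hr0.le]
  have e3 : Real.sqrt (1 / μ ^ 2 - 1 / r ^ 2) = s / (μ * r) := by
    have : 1 / μ ^ 2 - 1 / r ^ 2 = (r ^ 2 - μ ^ 2) / (μ * r) ^ 2 := by
      field_simp
    rw [this, Real.sqrt_div hsq.le, Real.sqrt_sq (by positivity)]
  -- derivative of the sqrt part
  have hg : HasDerivAt (fun r' : ℝ => r' ^ 2 / μ ^ 2 - 1) (2 * r / μ ^ 2) r := by
    have := ((hasDerivAt_pow 2 r).div_const (μ ^ 2)).sub_const 1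
    simpa using this
  have hgx : r ^ 2 / μ ^ 2 - 1 ≠ 0 := by
    rw [show r ^ 2 / μ ^ 2 - 1 = (r ^ 2 - μ ^ 2) / μ ^ 2 by field_simp]
    positivity
  have hsqrt : HasDerivAt (fun r' : ℝ => Real.sqrt (r' ^ 2 / μ ^ 2 - 1))
      (2 * r / μ ^ 2 / (2 * Real.sqrt (r ^ 2 / μ ^ 2 - 1))) r := hg.sqrt hgx
  -- derivative of μ / r'
  have hdiv : HasDerivAt (fun r' : ℝ => μ / r') (-μ / r ^ 2) r := by
    have := (hasDerivAt_const r μ).div (hasDerivAt_id r) hr0'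
    simpa [Pi.div_def] using this
  have hx1 : μ / r ≠ -1 := by
    have : 0 < μ / r := by positivity
    linarith
  have hx2 : μ / r ≠ 1 := by
    have : μ / r < 1 := (div_lt_one hr0).mpr hμr
    linarith
  have harccos : HasDerivAt (fun r' : ℝ => Real.arccos (μ / r'))
      (-(1 / Real.sqrt (1 - (μ / r) ^ 2)) * (-μ / r ^ 2)) r :=
    (Real.hasDerivAt_arccos hx1 hx2).comp r hdiv
  have hfderiv : HasDerivAt f (Real.sqrt (1 / μ ^ 2 - 1 / r ^ 2)) r := by
    have h := hsqrt.sub harccos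
    have hfun : f = fun r' : ℝ => Real.sqrt (r' ^ 2 / μ ^ 2 - 1) - Real.arccos (μ / r') := by
      funext r'; exact hf r'
    rw [hfun]
    refine h.congr_deriv ?_; symm
    rw [e1, e2, e3]
    field_simp
    linear_combination hs2
  refine ⟨hfderiv, ?_, ?_, ?_⟩
  · intro θ
    have : (fun θ' => V r θ') = fun θ' => θ' + (- Real.sqrt (1 / μ ^ 2 - 1) + Real.arccos μ
        + Real.sqrt (r ^ 2 / μ ^ 2 - 1) - Real.arccos (μ / r)) := by
      funext θ'; rw [hV]; ring
    rw [this]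
    simpa using (hasDerivAt_id θ).add_const (- Real.sqrt (1 / μ ^ 2 - 1) + Real.arccos μ
        + Real.sqrt (r ^ 2 / μ ^ 2 - 1) - Real.arccos (μ / r))
  · intro θ
    have : (fun r' => V r' θ) = fun r' => (θ - Real.sqrt (1 / μ ^ 2 - 1) + Real.arccos μ) + f r' := by
      funext r'; rw [hV, hf]; ring
    rw [this]
    exact hfderiv.const_add _
  · rw [e3]
    field_simp
    nlinarith [hs2]
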